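/- Let n ≥ 2, L ≥ 1, r_0 > 0. If two cubes Λ_L(u), Λ_L(v) ⊂ R^{nd} are both fully interactive (i.e., dist_∞(u, D) < (n−1)(2L+r_0) and dist_∞(v, D) < (n−1)(2L+r_0), D the diagonal) and ‖u − v‖_∞ ≥ 4(n−1)(2L+r_0)+2L, then Π_j Λ_L(u) ∩ Π_k Λ_L(v) = ∅ for all j, k ∈ {1,…,n}; in particular Π Λ_L(u) ∩ Π Λ_L(v) = ∅. -/
import Mathlib


/-- If the cubes `Λ_L(u), Λ_L(v) ⊂ ℝ^{nd}` are both fully interactive,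
i.e. `dist_∞(u, D) < (n−1)(2L+r₀)` and `dist_∞(v, D) < (n−1)(2L+r₀)` where `D` is
the diagonal, and `‖u − v‖_∞ ≥ 4(n−1)(2L+r₀)+2L`, then
`Π_j Λ_L(u) ∩ Π_k Λ_L(v) = ∅` for all `j, k`; in particular
`Π Λ_L(u) ∩ Π Λ_L(v) = ∅`.  Here `Π_j Λ_L(u)` is the open sup-norm cube of radius
`L` in `ℝ^d` around `u_j`, and full interactivity is expressed by the existence of
`x ∈ ℤ^d` with `max_j ‖u_j − x‖_∞ < (n−1)(2L+r₀)`. -/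
theorem stmt5 (d n : ℕ) (hn : 2 ≤ n) (L : ℕ) (hL : 1 ≤ L) (r0 : ℝ) (hr0 : 0 < r0)
    (u v : Fin n → Fin d → ℤ)
    (hu : ∃ x : Fin d → ℤ, ∀ j : Fin n, ‖u j - x‖ < ((n : ℝ) - 1) * (2 * L + r0))
    (hv : ∃ x : Fin d → ℤ, ∀ j : Fin n, ‖v j - x‖ < ((n : ℝ) - 1) * (2 * L + r0))
    (hsep : 4 * ((n : ℝ) - 1) * (2 * L + r0) + 2 * L ≤ ‖u - v‖) :
    (∀ j k : Fin n,
      Metric.ball (fun i => ((u j i : ℝ))) (L : ℝ) ∩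
        Metric.ball (fun i => ((v k i : ℝ))) (L : ℝ) = ∅) ∧
    (⋃ j, Metric.ball (fun i => ((u j i : ℝ))) (L : ℝ)) ∩
      (⋃ k, Metric.ball (fun i => ((v k i : ℝ))) (L : ℝ)) = ∅ := by
  obtain ⟨x, hx⟩ := hu
  obtain ⟨y, hy⟩ := hv
  set M : ℝ := ((n : ℝ) - 1) * (2 * L + r0) with hM
  have hn2 : (2 : ℝ) ≤ (n : ℝ) := by exact_mod_cast hn
  have hL1 : (1 : ℝ) ≤ (L : ℝ) := by exact_mod_cast hL
  have hMpos : 0 < M := by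
    apply mul_pos <;> linarith
  -- the diagonal points are far apart
  have hxy : 2 * M + 2 * L ≤ ‖x - y‖ := by
    have h1 : ‖u - v‖ ≤ 2 * M + ‖x - y‖ := by
      refine (pi_norm_le_iff_of_nonneg (by positivity)).2 fun m => ?_
      have h2 : (u - v) m = (u m - x) + (x - y) + (y - v m) := by
        simp only [Pi.sub_apply]; abel
      rw [h2]
      calc ‖(u m - x) + (x - y) + (y - v m)‖
          ≤ ‖(u m - x) + (x - y)‖ + ‖y - v m‖ := norm_add_le _ _
        _ ≤ ‖u m - x‖ + ‖x - y‖ + ‖y - v m‖ := by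
            have := norm_add_le (u m - x) (x - y); linarith
        _ ≤ M + ‖x - y‖ + M := by
            have h3 := hx m
            have h4 := hy m
            rw [norm_sub_rev] at h4
            linarith
        _ = 2 * M + ‖x - y‖ := by ring
    have : 4 * M + 2 * L ≤ ‖u - v‖ := by
      rw [hM]; calc (4 : ℝ) * (((n : ℝ) - 1) * (2 * L + r0)) + 2 * L
          = 4 * ((n : ℝ) - 1) * (2 * L + r0) + 2 * L := by ring
        _ ≤ ‖u - v‖ := hsep
    linarith
  -- all cross distances are large
  have hjk : ∀ j k : Fin n, 2 * (L : ℝ) < ‖u j - v k‖ := by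
    intro j k
    have h2 : x - y = (x - u j) + (u j - v k) + (v k - y) := by abel
    have h5 : ‖x - y‖ ≤ ‖x - u j‖ + ‖u j - v k‖ + ‖v k - y‖ := by
      rw [h2]
      have := norm_add_le ((x - u j) + (u j - v k)) (v k - y)
      have := norm_add_le (x - u j) (u j - v k)
      linarith
    have h3 := hx j
    rw [norm_sub_rev] at h3
    have h4 := hy k
    linarith
  -- bridge: integer norm bounds real distance
  have key : ∀ j k : Fin n, ‖u j - v k‖ ≤
      dist (fun i => ((u j i : ℝ))) (fun i => ((v k i : ℝ))) := by
    intro j k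
    refine (pi_norm_le_iff_of_nonneg dist_nonneg).2 fun i => ?_
    have h1 : ‖(u j - v k) i‖ = dist ((u j i : ℝ)) ((v k i : ℝ)) := by
      rw [Pi.sub_apply, Real.dist_eq, ← Int.norm_cast_real]
      push_cast
      rfl
    rw [h1]
    exact dist_le_pi_dist (fun i => ((u j i : ℝ))) (fun i => ((v k i : ℝ))) i
  have hdisj : ∀ j k : Fin n,
      Metric.ball (fun i => ((u j i : ℝ))) (L : ℝ) ∩
        Metric.ball (fun i => ((v k i : ℝ))) (L : ℝ) = ∅ := by
    intro j k
    rw [Set.eq_empty_iff_forall_notMem]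
    rintro t ⟨ht1, ht2⟩
    rw [Metric.mem_ball] at ht1 ht2
    have h1 : dist (fun i => ((u j i : ℝ))) (fun i => ((v k i : ℝ))) < 2 * L := by
      have := dist_triangle (fun i => ((u j i : ℝ))) t (fun i => ((v k i : ℝ)))
      rw [dist_comm _ t] at this
      linarith
    have := key j k
    have := hjk j k
    linarith
  refine ⟨hdisj, ?_⟩
  rw [Set.eq_empty_iff_forall_notMem]
  rintro t ⟨ht1, ht2⟩
  obtain ⟨j, hj⟩ := Set.mem_iUnion.1 ht1
  obtain ⟨k, hk⟩ := Set.mem_iUnion.1 ht2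
  have := hdisj j k
  rw [Set.eq_empty_iff_forall_notMem] at this
  exact this t ⟨hj, hk⟩
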